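/- Let G be a group and ν(G) Rocco's construction on G. For every integer r ≥ 3, for any two tuples ε = (ε₁,…,ε_r) and δ = (δ₁,…,δ_r) in {1, φ}^r, each of which is neither the constant tuple (1,…,1) nor the constant tuple (φ,…,φ), and for all g₁,…,g_r ∈ G, the left-normed commutators satisfy [g₁^{ε₁}, …, g_r^{ε_r}] = [g₁^{δ₁}, …, g_r^{δ_r}] in ν(G). -/

import Mathlib

/-- The paper's commutator convention: `[x, y] = x⁻¹ * y⁻¹ * x * y`. -/
def cm {G : Type*} [Group G] (x y : G) : G := x⁻¹ * y⁻¹ * x * y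

/-- Conjugation convention: `x ^ y = y⁻¹ * x * y`. -/
def cj {G : Type*} [Group G] (x y : G) : G := y⁻¹ * x * y

section Helpers
variable {H K : Type*} [Group H] [Group K]
lemma cj_cj (a b c : H) : cj (cj a b) c = cj a (b * c) := by simp [cj, mul_assoc]
lemma cj_mul (a b c : H) : cj (a * b) c = cj a c * cj b c := by simp [cj]; group
lemma cj_inv (a b : H) : cj a⁻¹ b = (cj a b)⁻¹ := by simp [cj, mul_assoc]
lemma cj_self (a : H) : cj a a = a := by simp [cj]
lemma cj_inv_self (a : H) : cj a a⁻¹ = a := by simp [cj]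
lemma cm_eq (a b : H) : cm a b = a⁻¹ * cj a b := by simp [cm, cj, mul_assoc]
lemma cj_eq (a b : H) : cj a b = a * cm a b := by simp [cm, cj]; group
lemma cm_inv_rev (a b : H) : (cm a b)⁻¹ = cm b a := by simp [cm]; group
lemma cm_mul_left (a b c : H) : cm (a * b) c = cj (cm a c) b * cm b c := by
  simp [cm, cj]; group
lemma cm_mul_right (a b c : H) : cm a (b * c) = cm a c * cj (cm a b) c := by
  simp [cm, cj]; group
lemma cm_inv_left (a b : H) : cm a⁻¹ b = (cj (cm a b) a⁻¹)⁻¹ := by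
  simp [cm, cj]; group
lemma map_cm (φ : H →* K) (a b : H) : φ (cm a b) = cm (φ a) (φ b) := by simp [cm]
lemma map_cj (φ : H →* K) (a b : H) : φ (cj a b) = cj (φ a) (φ b) := by simp [cj]
lemma cj_one_r (a : H) : cj a 1 = a := by simp [cj]
lemma cj_cj_self (x y : H) : cj x (cj x y) = cj x (cm x y) := by simp [cj, cm]; group
lemma cj_cj_cm (z x y : H) : cj (cj z x⁻¹) (cj x y) = cj z (cm x y) := by simp [cj, cm]; group
lemma cm_inv_left' (a b : H) : cm a⁻¹ b = a * (cj a b)⁻¹ := by simp [cm, cj]; group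
lemma cj_cm_cm (x y : H) : cj (cm x y) (cm y x) = cm x y := by
  simp [cj, cm]; group
end Helpers


namespace Rocco

variable (G : Type*) [Group G]

/-- The defining relators of Rocco's group `ν(G)`, inside the free product `G ∗ G`
(the second factor playing the role of the isomorphic copy `G^φ`). -/
def rels : Set (Monoid.Coprod G G) :=
  {x | ∃ g₁ g₂ g₃ : G,
    x = cj (cm (Monoid.Coprod.inl g₁) (Monoid.Coprod.inr g₂)) (Monoid.Coprod.inl g₃) *
        (cm (Monoid.Coprod.inl (cj g₁ g₃)) (Monoid.Coprod.inr (cj g₂ g₃)))⁻¹ ∨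
    x = cj (cm (Monoid.Coprod.inl g₁) (Monoid.Coprod.inr g₂)) (Monoid.Coprod.inl g₃) *
        (cj (cm (Monoid.Coprod.inl g₁) (Monoid.Coprod.inr g₂)) (Monoid.Coprod.inr g₃))⁻¹}

/-- Rocco's construction `ν(G)`. -/
abbrev nu := Monoid.Coprod G G ⧸ Subgroup.normalClosure (rels G)

/-- The canonical image of `G` in `ν(G)`. -/
def ν₁ : G →* nu G := (QuotientGroup.mk' (Subgroup.normalClosure (rels G))).comp Monoid.Coprod.inl

/-- The canonical image of the copy `G^φ` in `ν(G)`; `ν₂ g` plays the role of `g^φ`. -/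
def ν₂ : G →* nu G := (QuotientGroup.mk' (Subgroup.normalClosure (rels G))).comp Monoid.Coprod.inr

end Rocco

namespace Rocco

variable {G : Type*} [Group G]

local notation "l" => ν₁ G
local notation "f" => ν₂ G

lemma rel_eq_one {x : Monoid.Coprod G G} (hx : x ∈ rels G) :
    (QuotientGroup.mk' (Subgroup.normalClosure (rels G))) x = 1 := by
  rw [QuotientGroup.mk'_apply, QuotientGroup.eq_one_iff]
  exact Subgroup.subset_normalClosure hx

lemma e1 (a b c : G) : cj (cm (l a) (f b)) (l c) = cm (l (cj a c)) (f (cj b c)) := by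
  have h := rel_eq_one (x := cj (cm (Monoid.Coprod.inl a) (Monoid.Coprod.inr b)) (Monoid.Coprod.inl c) *
        (cm (Monoid.Coprod.inl (cj a c)) (Monoid.Coprod.inr (cj b c)))⁻¹) ⟨a, b, c, Or.inl rfl⟩
  have h2 : (QuotientGroup.mk' (Subgroup.normalClosure (rels G)))
      (cj (cm (Monoid.Coprod.inl a) (Monoid.Coprod.inr b)) (Monoid.Coprod.inl c)) =
      (QuotientGroup.mk' (Subgroup.normalClosure (rels G)))
      (cm (Monoid.Coprod.inl (cj a c)) (Monoid.Coprod.inr (cj b c))) := by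
    rw [map_mul, map_inv] at h
    exact mul_inv_eq_one.mp h
  simpa [ν₁, ν₂, map_cj, map_cm] using h2

lemma e2 (a b c : G) : cj (cm (l a) (f b)) (l c) = cj (cm (l a) (f b)) (f c) := by
  have h := rel_eq_one (x := cj (cm (Monoid.Coprod.inl a) (Monoid.Coprod.inr b)) (Monoid.Coprod.inl c) *
        (cj (cm (Monoid.Coprod.inl a) (Monoid.Coprod.inr b)) (Monoid.Coprod.inr c))⁻¹) ⟨a, b, c, Or.inr rfl⟩
  have h2 : (QuotientGroup.mk' (Subgroup.normalClosure (rels G)))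
      (cj (cm (Monoid.Coprod.inl a) (Monoid.Coprod.inr b)) (Monoid.Coprod.inl c)) =
      (QuotientGroup.mk' (Subgroup.normalClosure (rels G)))
      (cj (cm (Monoid.Coprod.inl a) (Monoid.Coprod.inr b)) (Monoid.Coprod.inr c)) := by
    rw [map_mul, map_inv] at h
    exact mul_inv_eq_one.mp h
  simpa [ν₁, ν₂, map_cj, map_cm] using h2

/-- The subgroup `N = [G, G^φ]`. -/
def NN : Subgroup (nu G) := Subgroup.closure {x | ∃ a b : G, x = cm (l a) (f b)}

lemma t_mem (a b : G) : cm (l a) (f b) ∈ NN (G := G) := Subgroup.subset_closure ⟨a, b, rfl⟩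

/-- conjugation by `f c` equals conjugation by `l c` on `N`. -/
lemma cj_f_eq_cj_l {n : nu G} (hn : n ∈ NN (G := G)) (c : G) : cj n (f c) = cj n (l c) := by
  induction hn using Subgroup.closure_induction with
  | mem x hx => obtain ⟨a, b, rfl⟩ := hx; exact (e2 a b c).symm
  | one => simp [cj]
  | mul x y _ _ hx hy => rw [cj_mul, cj_mul, hx, hy]
  | inv x _ hx => rw [cj_inv, cj_inv, hx]

lemma cj_l_mem {n : nu G} (hn : n ∈ NN (G := G)) (c : G) : cj n (l c) ∈ NN (G := G) := by
  induction hn using Subgroup.closure_induction with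
  | mem x hx =>
    obtain ⟨a, b, rfl⟩ := hx
    rw [e1]; exact t_mem _ _
  | one => simp [cj]
  | mul x y _ _ hx hy => rw [cj_mul]; exact Subgroup.mul_mem _ hx hy
  | inv x _ hx => rw [cj_inv]; exact Subgroup.inv_mem _ hx

/-- generation of nu G -/
lemma mem_closure_ranges (u : nu G) :
    u ∈ Subgroup.closure (Set.range (l) ∪ Set.range (f)) := by
  obtain ⟨x, rfl⟩ := QuotientGroup.mk'_surjective (Subgroup.normalClosure (rels G)) u
  induction x using Monoid.Coprod.induction_on with
  | inl m => exact Subgroup.subset_closure (Or.inl ⟨m, rfl⟩)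
  | inr m => exact Subgroup.subset_closure (Or.inr ⟨m, rfl⟩)
  | mul x y hx hy => rw [map_mul]; exact Subgroup.mul_mem _ hx hy

lemma cj_mem {n : nu G} (hn : n ∈ NN (G := G)) (u : nu G) : cj n u ∈ NN (G := G) := by
  have key : ∀ u : nu G, (∀ n, n ∈ NN (G := G) → cj n u ∈ NN (G := G)) ∧
      (∀ n, n ∈ NN (G := G) → cj n u⁻¹ ∈ NN (G := G)) := by
    intro u
    have := mem_closure_ranges u
    induction this using Subgroup.closure_induction with
    | mem x hx =>
      rcases hx with ⟨c, rfl⟩ | ⟨c, rfl⟩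
      · exact ⟨fun n hn => cj_l_mem hn c, fun n hn => by
          rw [← map_inv]; exact cj_l_mem hn c⁻¹⟩
      · refine ⟨fun n hn => ?_, fun n hn => ?_⟩
        · rw [cj_f_eq_cj_l hn]; exact cj_l_mem hn c
        · rw [← map_inv, cj_f_eq_cj_l hn]; exact cj_l_mem hn c⁻¹
    | one => constructor <;> intro n hn <;> simpa [cj]
    | mul x y _ _ hx hy =>
      refine ⟨fun n hn => ?_, fun n hn => ?_⟩
      · rw [← cj_cj]; exact hy.1 _ (hx.1 _ hn)
      · rw [mul_inv_rev, ← cj_cj]; exact hx.2 _ (hy.2 _ hn)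
    | inv x _ hx => exact ⟨hx.2, by simpa using hx.1⟩
  exact (key u).1 n hn

instance NN_normal : (NN (G := G)).Normal := by
  constructor
  intro n hn g
  have : g * n * g⁻¹ = cj n g⁻¹ := by simp [cj, mul_assoc]
  rw [this]; exact cj_mem hn g⁻¹

/-- the projection π : nu G → G identifying both copies. -/
def π : nu G →* G :=
  QuotientGroup.lift (Subgroup.normalClosure (rels G))
    (Monoid.Coprod.lift (MonoidHom.id G) (MonoidHom.id G))
    (by
      intro x hx
      refine Subgroup.normalClosure_le_normal (N := (Monoid.Coprod.lift (MonoidHom.id G) (MonoidHom.id G)).ker) ?_ hx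
      rintro y ⟨a, b, c, rfl | rfl⟩ <;>
        simp [MonoidHom.mem_ker, map_cj, map_cm, cm, cj] <;> group)

lemma π_l (a : G) : π (l a) = a := by
  simp [π, ν₁, QuotientGroup.mk'_apply]

lemma π_f (a : G) : π (f a) = a := by
  simp [π, ν₂, QuotientGroup.mk'_apply]

/-- Master lemma: conjugation of `N`-elements by `u` is conjugation by `l (π u)`. -/
lemma ML (u : nu G) {n : nu G} (hn : n ∈ NN (G := G)) : cj n u = cj n (l (π u)) := by
  have key : ∀ u : nu G, ∀ n, n ∈ NN (G := G) → cj n u = cj n (l (π u)) := by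
    intro u
    have := mem_closure_ranges u
    induction this using Subgroup.closure_induction with
    | mem x hx =>
      rcases hx with ⟨c, rfl⟩ | ⟨c, rfl⟩
      · intro n hn; rw [π_l]
      · intro n hn; rw [π_f]; exact cj_f_eq_cj_l hn c
    | one => intro n hn; simp [cj]
    | mul x y _ _ hx hy =>
      intro n hn
      rw [← cj_cj, hx n hn, hy _ (cj_l_mem hn _), cj_cj, ← map_mul, ← map_mul]
    | inv x hxm hx =>
      intro n hn
      have hm : cj n x⁻¹ ∈ NN (G := G) := cj_mem hn x⁻¹
      have h1 : cj (cj n x⁻¹) x = n := by rw [cj_cj]; simp [cj]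
      have h2 := hx _ hm
      rw [h2] at h1
      have h3 : cj (cj (cj n x⁻¹) (l (π x))) ((l (π x))⁻¹) = cj n ((l (π x))⁻¹) := by rw [h1]
      rw [cj_cj, mul_inv_cancel] at h3
      simp only [cj, one_mul, mul_one, inv_one] at h3
      rw [map_inv, map_inv]
      simp only [cj]
      exact h3
  exact key u n hn

end Rocco

namespace Rocco

variable {G : Type*} [Group G]

local notation "l" => ν₁ G
local notation "f" => ν₂ G

lemma cm_f_eq_cm_l {n : nu G} (hn : n ∈ NN (G := G)) (c : G) :
    cm n (f c) = cm n (l c) := by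
  rw [cm_eq, cm_eq, cj_f_eq_cj_l hn]

lemma π_t (x y : G) : π (cm (l x) (f y)) = cm x y := by
  rw [map_cm, π_l, π_f]

lemma π_s (x y : G) : π (cm (f x) (l y)) = cm x y := by
  rw [map_cm, π_f, π_l]

lemma cj_t {n : nu G} (hn : n ∈ NN (G := G)) (x y : G) :
    cj n (cm (l x) (f y)) = cj n (l (cm x y)) := by
  rw [ML _ hn, π_t]

lemma cj_s {n : nu G} (hn : n ∈ NN (G := G)) (x y : G) :
    cj n (cm (f x) (l y)) = cj n (l (cm x y)) := by
  rw [ML _ hn, π_s]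

lemma s_mem (a b : G) : cm (f a) (l b) ∈ NN (G := G) := by
  rw [← cm_inv_rev]; exact Subgroup.inv_mem _ (t_mem b a)

lemma F5 (a b : G) : cm (l a⁻¹) (f b) = (cm (l a) (f (cj b a⁻¹)))⁻¹ := by
  rw [map_inv, cm_inv_left, ← map_inv, e1, cj_inv_self]

lemma F3' (a b c : G) : cj (cm (f a) (l b)) (l c) = cm (f (cj a c)) (l (cj b c)) := by
  rw [← cm_inv_rev, cj_inv, e1, cm_inv_rev]

lemma F3'f (a b c : G) : cj (cm (f a) (l b)) (f c) = cm (f (cj a c)) (l (cj b c)) := by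
  rw [cj_f_eq_cj_l (s_mem a b), F3']

lemma F5' (a b : G) : cm (f a⁻¹) (l b) = (cm (f a) (l (cj b a⁻¹)))⁻¹ := by
  rw [map_inv, cm_inv_left, ← map_inv, F3'f, cj_inv_self]

lemma star (x y z : G) :
    cm (l x) (f y) * cm (l (cj x y)) (f z)
      = cm (l x) (f z) * cm (l (cj x z)) (f (cj y z)) := by
  have h1 : cm (l x) (f (y * z))
      = cm (l x) (f z) * cm (l (cj x z)) (f (cj y z)) := by
    rw [map_mul, cm_mul_right, cj_f_eq_cj_l (t_mem x y), e1]
  have h2 : cm (l x) (f (y * z))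
      = cm (l x) (f y) * cm (l (cj x y)) (f z) := by
    have hz : y * z = cj z y⁻¹ * y := by simp only [cj]; group
    rw [hz, map_mul, cm_mul_right, cj_f_eq_cj_l (t_mem x (cj z y⁻¹)), e1,
      cj_cj, inv_mul_cancel, cj_one_r]
  rw [← h2, h1]

lemma star' (x y z : G) :
    cm (f x) (l y) * cm (f (cj x y)) (l z)
      = cm (f x) (l z) * cm (f (cj x z)) (l (cj y z)) := by
  have h1 : cm (f x) (l (y * z))
      = cm (f x) (l z) * cm (f (cj x z)) (l (cj y z)) := by
    rw [map_mul, cm_mul_right, F3']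
  have h2 : cm (f x) (l (y * z))
      = cm (f x) (l y) * cm (f (cj x y)) (l z) := by
    have hz : y * z = cj z y⁻¹ * y := by simp only [cj]; group
    rw [hz, map_mul, cm_mul_right, F3', cj_cj, inv_mul_cancel, cj_one_r]
  rw [← h2, h1]

/-- identity (2): `[x, y, z^φ] = [x, y^φ, z]`. -/
lemma I1 (x y z : G) : cm (l (cm x y)) (f z) = cm (cm (l x) (f y)) (l z) := by
  have hA : cm (l (cm x y)) (f z)
      = (cj (cm (l x) (f z)) (cm (l x) (f y)))⁻¹ * cm (l (cj x y)) (f z) := by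
    calc cm (l (cm x y)) (f z)
        = cm (l (x⁻¹ * cj x y)) (f z) := by rw [← cm_eq]
      _ = cj (cm (l x⁻¹) (f z)) (l (cj x y)) * cm (l (cj x y)) (f z) := by
          rw [map_mul, cm_mul_left]
      _ = _ := by
          rw [F5, cj_inv, e1, cj_cj_self, cj_cj_cm, ← e1, cj_t (t_mem x z)]
  have hB : cm (l (cj x y)) (f z)
      = (cm (l x) (f y))⁻¹ * (cm (l x) (f z) * cm (l (cj x z)) (f (cj y z))) := by
    rw [← star]; group
  have hC : cm (cm (l x) (f y)) (l z)
      = (cm (l x) (f y))⁻¹ * cm (l (cj x z)) (f (cj y z)) := by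
    rw [cm_eq, e1]
  rw [hA, hB, hC]
  simp only [cj]
  group

/-- mirror identity: `[x^φ, y, z] = [x^φ, y, z]` normal form. -/
lemma I5 (x y z : G) : cm (f (cm x y)) (l z) = cm (cm (f x) (l y)) (l z) := by
  have hA : cm (f (cm x y)) (l z)
      = (cj (cm (f x) (l z)) (cm (f x) (l y)))⁻¹ * cm (f (cj x y)) (l z) := by
    calc cm (f (cm x y)) (l z)
        = cm (f (x⁻¹ * cj x y)) (l z) := by rw [← cm_eq]
      _ = cj (cm (f x⁻¹) (l z)) (f (cj x y)) * cm (f (cj x y)) (l z) := by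
          rw [map_mul, cm_mul_left]
      _ = _ := by
          rw [F5', cj_inv, F3'f, cj_cj_self, cj_cj_cm, ← F3', cj_s (s_mem x z)]
  have hB : cm (f (cj x y)) (l z)
      = (cm (f x) (l y))⁻¹ * (cm (f x) (l z) * cm (f (cj x z)) (l (cj y z))) := by
    rw [← star']; group
  have hC : cm (cm (f x) (l y)) (l z)
      = (cm (f x) (l y))⁻¹ * cm (f (cj x z)) (l (cj y z)) := by
    rw [cm_eq, F3']
  rw [hA, hB, hC]
  simp only [cj]
  group

/-- invariance of `[x, y^φ][y, x^φ]` under conjugation. -/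
lemma UI (x y c : G) : cm (l x) (f y) * cm (l y) (f x)
    = cm (l (cj x c)) (f (cj y c)) * cm (l (cj y c)) (f (cj x c)) := by
  have k1 : cm (l (cj x c)) (f (cj y c))
      = cm (l x) (f y) * cm (l (cm x y)) (f c) := by
    rw [← e1, cj_eq, I1]
  have k2 : cm (l (cj y c)) (f (cj x c))
      = cm (l y) (f x) * cm (l (cm y x)) (f c) := by
    rw [← e1, cj_eq, I1]
  have k3 : cm (l (cm x y)) (f c) * cm (l y) (f x)
      = cm (l y) (f x) * cm (l (cm x y)) (f (cj c (cm y x))) := by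
    calc cm (l (cm x y)) (f c) * cm (l y) (f x)
        = cm (l y) (f x) * cj (cm (l (cm x y)) (f c)) (cm (l y) (f x)) := by
          simp [cj]; group
      _ = cm (l y) (f x) * cj (cm (l (cm x y)) (f c)) (l (cm y x)) := by
          rw [cj_t (t_mem _ _)]
      _ = cm (l y) (f x) * cm (l (cj (cm x y) (cm y x))) (f (cj c (cm y x))) := by
          rw [e1]
      _ = _ := by rw [cj_cm_cm]
  have k4 : cm (l (cm y x)) (f c) = (cm (l (cm x y)) (f (cj c (cm y x))))⁻¹ := by
    rw [show cm y x = (cm x y)⁻¹ from (cm_inv_rev x y).symm] 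
    rw [F5]
  rw [k1, k2]
  calc cm (l x) (f y) * cm (l y) (f x)
      = cm (l x) (f y) * (cm (l y) (f x) * cm (l (cm x y)) (f (cj c (cm y x)))
          * (cm (l (cm x y)) (f (cj c (cm y x))))⁻¹) := by group
    _ = cm (l x) (f y) * (cm (l (cm x y)) (f c) * cm (l y) (f x)
          * (cm (l (cm x y)) (f (cj c (cm y x))))⁻¹) := by rw [k3]
    _ = cm (l x) (f y) * (cm (l (cm x y)) (f c) * (cm (l y) (f x)
          * cm (l (cm y x)) (f c))) := by rw [k4]; group
    _ = _ := by group

/-- identity (4): `[x^φ, y, z] = [x, y^φ, z]`. -/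
lemma I4 (a b c : G) : cm (cm (f a) (l b)) (l c) = cm (cm (l a) (f b)) (l c) := by
  have lhs' : cm (cm (f a) (l b)) (l c)
      = cm (l b) (f a) * (cm (l (cj b c)) (f (cj a c)))⁻¹ := by
    rw [← cm_inv_rev (l b) (f a), cm_inv_left', e1]
  have rhs' : cm (cm (l a) (f b)) (l c)
      = (cm (l a) (f b))⁻¹ * cm (l (cj a c)) (f (cj b c)) := by
    rw [cm_eq, e1]
  rw [lhs', rhs']
  have h := UI a b c
  calc cm (l b) (f a) * (cm (l (cj b c)) (f (cj a c)))⁻¹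
      = (cm (l a) (f b))⁻¹ * (cm (l a) (f b) * cm (l b) (f a))
          * (cm (l (cj b c)) (f (cj a c)))⁻¹ := by group
    _ = (cm (l a) (f b))⁻¹ * (cm (l (cj a c)) (f (cj b c)) * cm (l (cj b c)) (f (cj a c)))
          * (cm (l (cj b c)) (f (cj a c)))⁻¹ := by rw [h]
    _ = _ := by group

end Rocco

/-- Left-normed commutator `[x₁, x₂, …, x_r]` of a list of elements. -/
def leftNormed {H : Type*} [Group H] : List H → H
  | [] => 1
  | x :: xs => xs.foldl cm x

section Lists
variable {H K : Type*} [Group H] [Group K]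

lemma leftNormed_concat (xs : List H) (hxs : xs ≠ []) (x : H) :
    leftNormed (xs ++ [x]) = cm (leftNormed xs) x := by
  obtain ⟨a, as, rfl⟩ := List.exists_cons_of_ne_nil hxs
  simp [leftNormed, List.foldl_append]

lemma leftNormed_map (φ : H →* K) (xs : List H) (hxs : xs ≠ []) :
    leftNormed (xs.map φ) = φ (leftNormed xs) := by
  obtain ⟨a, as, rfl⟩ := List.exists_cons_of_ne_nil hxs
  simp only [List.map_cons, leftNormed]
  induction as generalizing a with
  | nil => simp
  | cons b bs ih => simpa [← map_cm] using ih (cm a b)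

end Lists


namespace Rocco

variable {G : Type*} [Group G]

local notation "l" => ν₁ G
local notation "f" => ν₂ G

/-- decoration -/
def dnu : Bool × G → nu G := fun p => if p.1 then ν₂ G p.2 else ν₁ G p.2

/-- the canonical value of a mixed left-normed commutator: decoration `(1, φ, 1, …, 1)`. -/
def canon : List G → nu G
  | x :: y :: zs => zs.foldl (fun acc c => cm acc (ν₁ G c)) (cm (ν₁ G x) (ν₂ G y))
  | _ => 1

lemma canon_append (gs : List G) (hgs : 2 ≤ gs.length) (c : G) :
    canon (gs ++ [c]) = cm (canon gs) (l c) := by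
  match gs, hgs with
  | x :: y :: zs, _ => simp [canon, List.foldl_append]

lemma cm_mem {n : nu G} (hn : n ∈ NN (G := G)) (u : nu G) : cm n u ∈ NN (G := G) := by
  rw [cm_eq]
  exact Subgroup.mul_mem _ (Subgroup.inv_mem _ hn) (cj_mem hn u)

lemma canon_mem (gs : List G) (hgs : 2 ≤ gs.length) : canon gs ∈ NN (G := G) := by
  match gs, hgs with
  | x :: y :: zs, _ =>
    induction zs using List.reverseRecOn with
    | nil => exact t_mem x y
    | append_singleton zs c ih =>
      have : canon (x :: y :: (zs ++ [c])) = cm (canon (x :: y :: zs)) (l c) := by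
        have := canon_append (x :: y :: zs) (by simp) c
        simpa using this
      rw [this]
      exact cm_mem (ih (by simp)) _

lemma base_case (b₁ b₂ b₃ : Bool) (x y z : G)
    (ht : b₁ = true ∨ b₂ = true ∨ b₃ = true)
    (hf : b₁ = false ∨ b₂ = false ∨ b₃ = false) :
    cm (cm (dnu (b₁, x)) (dnu (b₂, y))) (dnu (b₃, z)) = canon [x, y, z] := by
  have hcanon : canon [x, y, z] = cm (cm (l x) (f y)) (l z) := by simp [canon]
  rcases b₁ <;> rcases b₂ <;> rcases b₃ <;> simp only [dnu, if_true, if_false, Bool.false_eq_true] <;> rw [hcanon]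
  · exact absurd ht (by simp)
  · rw [← map_cm, I1]
  · rw [cm_f_eq_cm_l (t_mem x y)]
  · rw [I4]
  · rw [cm_f_eq_cm_l (s_mem x y), I4]
  · rw [← map_cm, I5, I4]
  · exact absurd hf (by simp)

lemma main_lemma : ∀ n, 3 ≤ n → ∀ p : List (Bool × G), p.length = n →
    (∃ x ∈ p, x.1 = true) → (∃ x ∈ p, x.1 = false) →
    leftNormed (p.map dnu) = canon (p.map Prod.snd) := by
  intro n hn
  induction n, hn using Nat.le_induction with
  | base =>
    intro p hp ht hf
    obtain ⟨a, b, c, rfl⟩ := List.length_eq_three.mp hp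
    obtain ⟨b₁, x⟩ := a; obtain ⟨b₂, y⟩ := b; obtain ⟨b₃, z⟩ := c
    have hLN : leftNormed ([(b₁,x), (b₂,y), (b₃,z)].map dnu)
        = cm (cm (dnu (b₁,x)) (dnu (b₂,y))) (dnu (b₃,z)) := by
      simp [leftNormed]
    rw [hLN]
    have : ([((b₁,x) : Bool × G), (b₂,y), (b₃,z)].map Prod.snd) = [x, y, z] := by simp
    rw [this]
    exact base_case b₁ b₂ b₃ x y z (by simpa using ht) (by simpa using hf)
  | succ n hn ih =>
    intro p hp ht hf
    have hpne : p ≠ [] := by intro h; rw [h] at hp; simp at hp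
    have hsplit : p = p.dropLast ++ [p.getLast hpne] :=
      (List.dropLast_append_getLast hpne).symm
    set q := p.dropLast with hq
    set e := p.getLast hpne with he
    have hql : q.length = n := by
      rw [hq, List.length_dropLast, hp]
      omega
    have hqne : q ≠ [] := by
      intro h; rw [h] at hql; simp at hql; omega
    have hqmne : q.map dnu ≠ [] := by simpa using hqne
    have hLN : leftNormed (p.map dnu) = cm (leftNormed (q.map dnu)) (dnu e) := by
      conv_lhs => rw [hsplit]
      rw [List.map_append, List.map_singleton, leftNormed_concat _ hqmne]
    have hsnd : p.map Prod.snd = q.map Prod.snd ++ [e.2] := by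
      conv_lhs => rw [hsplit]
      simp
    have hgl : (q.map Prod.snd).length = n := by simpa using hql
    have hcanonapp : canon (q.map Prod.snd ++ [e.2]) = cm (canon (q.map Prod.snd)) (l e.2) :=
      canon_append _ (by omega) _
    by_cases hqt : ∃ x ∈ q, x.1 = true
    · by_cases hqf : ∃ x ∈ q, x.1 = false
      · -- mixed prefix
        have hcq := ih q hql hqt hqf
        have hmem : canon (q.map Prod.snd) ∈ NN (G := G) := canon_mem _ (by omega)
        have hde : cm (canon (q.map Prod.snd)) (dnu e) = cm (canon (q.map Prod.snd)) (l e.2) := by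
          cases he1 : e.1 <;> simp only [dnu, he1, if_true, if_false, Bool.false_eq_true]
          exact cm_f_eq_cm_l hmem _
        rw [hLN, hcq, hde, ← hcanonapp, ← hsnd]
      · -- q all true
        push_neg at hqf
        have hall : ∀ x ∈ q, x.1 = true := by
          intro x hx; simpa using hqf x hx
        have hef : e.1 = false := by
          rcases hf with ⟨x, hx, hxf⟩
          rw [hsplit] at hx
          rcases List.mem_append.mp hx with hx | hx
          · exact absurd (hall x hx) (by simp [hxf])
          · simp at hx; rw [← hx]; exact hxf
        have hmapq : q.map dnu = (q.map Prod.snd).map (ν₂ G) := by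
          rw [List.map_map]
          refine List.map_congr_left fun x hx => ?_
          simp [dnu, hall x hx]
        set gs := q.map Prod.snd with hgs
        have hgsne : gs ≠ [] := by intro h; rw [h] at hgl; simp at hgl; omega
        have hgsplit : gs = gs.dropLast ++ [gs.getLast hgsne] :=
          (List.dropLast_append_getLast hgsne).symm
        set hs := gs.dropLast with hhs
        set hh := gs.getLast hgsne with hhh
        have hhsl : hs.length = n - 1 := by rw [hhs, List.length_dropLast, hgl]
        have hhsne : hs ≠ [] := by intro h; rw [h] at hhsl; simp at hhsl; omega
        have hW : leftNormed (q.map dnu) = ν₂ G (cm (leftNormed hs) hh) := by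
          rw [hmapq, leftNormed_map _ _ hgsne]
          congr 1
          conv_lhs => rw [hgsplit]
          rw [leftNormed_concat _ hhsne]
        have hde : dnu e = l e.2 := by simp [dnu, hef]
        -- the flipped list
        set q' : List (Bool × G) := hs.map (fun a => (true, a)) ++ [(false, hh)] with hq'
        have hq'd : q'.map dnu = hs.map (ν₂ G) ++ [l hh] := by
          simp [hq', dnu, List.map_map]
        have hq's : q'.map Prod.snd = gs := by
          rw [hq', List.map_append, List.map_map]
          conv_rhs => rw [hgsplit]
          simp
        have hq'l : q'.length = n := by
          simp only [hq', List.length_append, List.length_map, List.length_cons, List.length_nil, hhsl]; omega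
        have hq't : ∃ x ∈ q', x.1 = true := by
          obtain ⟨a, as, hcons⟩ := List.exists_cons_of_ne_nil hhsne
          exact ⟨(true, a), by simp [hq', hcons], rfl⟩
        have hq'f : ∃ x ∈ q', x.1 = false := ⟨(false, hh), by simp [hq'], rfl⟩
        have hcq' := ih q' hq'l hq't hq'f
        rw [hq'd, hq's] at hcq'
        have hmf : leftNormed (hs.map (ν₂ G)) = ν₂ G (leftNormed hs) :=
          leftNormed_map _ _ hhsne
        rw [leftNormed_concat _ (by simpa using hhsne), hmf] at hcq'
        -- now assemble
        rw [hLN, hW, hde, I5, hcq', ← hcanonapp, ← hsnd]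
    · -- q all false
      push_neg at hqt
      have hall : ∀ x ∈ q, x.1 = false := by
        intro x hx; simpa using hqt x hx
      have het : e.1 = true := by
        rcases ht with ⟨x, hx, hxt⟩
        rw [hsplit] at hx
        rcases List.mem_append.mp hx with hx | hx
        · exact absurd (hall x hx) (by simp [hxt])
        · simp at hx; rw [← hx]; exact hxt
      have hmapq : q.map dnu = (q.map Prod.snd).map (ν₁ G) := by
        rw [List.map_map]
        refine List.map_congr_left fun x hx => ?_
        simp [dnu, hall x hx]
      set gs := q.map Prod.snd with hgs
      have hgsne : gs ≠ [] := by intro h; rw [h] at hgl; simp at hgl; omega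
      have hgsplit : gs = gs.dropLast ++ [gs.getLast hgsne] :=
        (List.dropLast_append_getLast hgsne).symm
      set hs := gs.dropLast with hhs
      set hh := gs.getLast hgsne with hhh
      have hhsl : hs.length = n - 1 := by rw [hhs, List.length_dropLast, hgl]
      have hhsne : hs ≠ [] := by intro h; rw [h] at hhsl; simp at hhsl; omega
      have hW : leftNormed (q.map dnu) = ν₁ G (cm (leftNormed hs) hh) := by
        rw [hmapq, leftNormed_map _ _ hgsne]
        congr 1
        conv_lhs => rw [hgsplit]
        rw [leftNormed_concat _ hhsne]
      have hde : dnu e = f e.2 := by simp [dnu, het]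
      set q' : List (Bool × G) := hs.map (fun a => (false, a)) ++ [(true, hh)] with hq'
      have hq'd : q'.map dnu = hs.map (ν₁ G) ++ [f hh] := by
        simp [hq', dnu, List.map_map]
      have hq's : q'.map Prod.snd = gs := by
        rw [hq', List.map_append, List.map_map]
        conv_rhs => rw [hgsplit]
        simp
      have hq'l : q'.length = n := by
        simp only [hq', List.length_append, List.length_map, List.length_cons, List.length_nil, hhsl]; omega
      have hq'f : ∃ x ∈ q', x.1 = false := by
        obtain ⟨a, as, hcons⟩ := List.exists_cons_of_ne_nil hhsne
        exact ⟨(false, a), by simp [hq', hcons], rfl⟩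
      have hq't : ∃ x ∈ q', x.1 = true := ⟨(true, hh), by simp [hq'], rfl⟩
      have hcq' := ih q' hq'l hq't hq'f
      rw [hq'd, hq's] at hcq'
      have hmf : leftNormed (hs.map (ν₁ G)) = ν₁ G (leftNormed hs) :=
        leftNormed_map _ _ hhsne
      rw [leftNormed_concat _ (by simpa using hhsne), hmf] at hcq'
      rw [hLN, hW, hde, I1, hcq', ← hcanonapp, ← hsnd]

end Rocco

open Rocco in
/-- Any two mixed decorations (neither all `1` nor all `φ`) of a left-normed commutator of
length `r ≥ 3` agree in `ν(G)`.  Here `ε i = true` means the letter `g i` carries `φ`. -/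
theorem leftNormed_mixed_eq {G : Type*} [Group G] {r : ℕ} (hr : 3 ≤ r)
    (ε δ : Fin r → Bool)
    (hε₁ : ε ≠ fun _ => false) (hε₂ : ε ≠ fun _ => true)
    (hδ₁ : δ ≠ fun _ => false) (hδ₂ : δ ≠ fun _ => true)
    (g : Fin r → G) :
    leftNormed (List.ofFn fun i => if ε i then ν₂ G (g i) else ν₁ G (g i)) =
      leftNormed (List.ofFn fun i => if δ i then ν₂ G (g i) else ν₁ G (g i)) := by
  have key : ∀ (ε : Fin r → Bool), ε ≠ (fun _ => false) → ε ≠ (fun _ => true) →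
      leftNormed (List.ofFn fun i => if ε i then ν₂ G (g i) else ν₁ G (g i))
        = Rocco.canon (List.ofFn g) := by
    intro ε h1 h2
    set p : List (Bool × G) := List.ofFn (fun i => (ε i, g i)) with hpdef
    have hmap : p.map Rocco.dnu
        = List.ofFn (fun i => if ε i then ν₂ G (g i) else ν₁ G (g i)) := by
      rw [hpdef, List.map_ofFn]; rfl
    have hsnd : p.map Prod.snd = List.ofFn g := by
      rw [hpdef, List.map_ofFn]; rfl
    have ht : ∃ x ∈ p, x.1 = true := by
      have h : ¬∀ i, ε i = false := fun h => h1 (funext h)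
      push_neg at h; obtain ⟨i, hi⟩ := h
      exact ⟨(ε i, g i), by rw [hpdef]; exact List.mem_ofFn.mpr ⟨i, rfl⟩, by simpa using hi⟩
    have hf : ∃ x ∈ p, x.1 = false := by
      have h : ¬∀ i, ε i = true := fun h => h2 (funext h)
      push_neg at h; obtain ⟨i, hi⟩ := h
      exact ⟨(ε i, g i), by rw [hpdef]; exact List.mem_ofFn.mpr ⟨i, rfl⟩, by simpa using hi⟩
    have hlen : p.length = r := by rw [hpdef]; simp
    have := Rocco.main_lemma r hr p hlen ht hf
    rw [hmap, hsnd] at this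
    exact this
  rw [key ε hε₁ hε₂, key δ hδ₁ hδ₂]
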